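/- There is no Baire measurable reduction of E_1 to an equivalence relation with all classes countable on a Polish space. That is, if Y is a Polish space, F is an equivalence relation on Y whose classes are all countable, and φ : (2^ℕ)^ℕ → Y is Baire measurable with x E_1 x' ⟺ φ(x) F φ(x'), then a contradiction follows. -/

import Mathlib

open Set

open Topology Set Filter TopologicalSpace

section KU
variable {A B : Type*} [TopologicalSpace A] [TopologicalSpace B]

lemma IsNowhereDense.isMeagre' {s : Set A} (h : IsNowhereDense s) : IsMeagre s :=
  isMeagre_iff_countable_union_isNowhereDense.mpr
    ⟨{s}, by simpa using h, countable_singleton s, by simp⟩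

lemma isMeagre_of_subset_sUnion {S : Set (Set A)} (hc : S.Countable)
    (h : ∀ t ∈ S, IsMeagre t) {s : Set A} (hs : s ⊆ ⋃₀ S) : IsMeagre s := by
  rcases S.eq_empty_or_nonempty with rfl | hne
  · rw [sUnion_empty, subset_empty_iff] at hs
    simpa [hs] using (IsMeagre.empty : IsMeagre (∅ : Set A))
  · rcases hc.exists_eq_range hne with ⟨f, rfl⟩
    rw [sUnion_range] at hs
    exact (isMeagre_iUnion fun n => h _ ⟨n, rfl⟩).mono hs

/-- Kuratowski–Ulam, easy direction, for a closed set with empty interior. -/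
lemma ku_closed [SecondCountableTopology B] {F : Set (A × B)}
    (hcl : IsClosed F) (hnwd : interior F = ∅) :
    ∀ᵇ a : A, IsMeagre {b | (a, b) ∈ F} := by
  obtain ⟨𝒱, h𝒱c, h𝒱ne, h𝒱b⟩ := exists_countable_basis B
  have hd : Dense (Fᶜ : Set (A × B)) := interior_eq_empty_iff_dense_compl.mp hnwd
  have key : ∀ V ∈ 𝒱, {a : A | ∃ b ∈ V, (a, b) ∉ F} ∈ residual A := by
    intro V hV
    apply residual_of_dense_open
    · have : {a : A | ∃ b ∈ V, (a, b) ∉ F} = ⋃ b ∈ V, {a : A | (a, b) ∉ F} := by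
        ext a; simp [mem_iUnion]
      rw [this]
      exact isOpen_biUnion fun b _ =>
        hcl.isOpen_compl.preimage (Continuous.prodMk_left b)
    · rw [dense_iff_inter_open]
      intro W hW hWne
      have hVne : V.Nonempty := by
        rcases V.eq_empty_or_nonempty with rfl | h
        · exact absurd hV h𝒱ne
        · exact h
      obtain ⟨p, hpbox, hpF⟩ := (dense_iff_inter_open.mp hd) (W ×ˢ V)
        (hW.prod (h𝒱b.isOpen hV)) (hWne.prod hVne)
      exact ⟨p.1, hpbox.1, p.2, hpbox.2, hpF⟩
  have hres : (⋂ V ∈ 𝒱, {a : A | ∃ b ∈ V, (a, b) ∉ F}) ∈ residual A :=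
    (countable_bInter_mem h𝒱c).mpr key
  refine mem_of_superset hres fun a ha => ?_
  simp only [mem_iInter, mem_setOf_eq] at ha
  have hseccl : IsClosed {b | (a, b) ∈ F} := hcl.preimage (Continuous.prodMk_right a)
  have hsecint : interior {b | (a, b) ∈ F} = ∅ := by
    by_contra h
    obtain ⟨b, hb⟩ := nonempty_iff_ne_empty.mpr h
    obtain ⟨V, hV𝒱, hbV, hVsub⟩ := h𝒱b.exists_subset_of_mem_open hb isOpen_interior
    obtain ⟨b', hb'V, hb'F⟩ := ha V hV𝒱
    exact hb'F (interior_subset (s := {b | (a, b) ∈ F}) (hVsub hb'V))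
  exact IsNowhereDense.isMeagre'
    ((hseccl.isNowhereDense_iff).mpr hsecint)

/-- Kuratowski–Ulam, easy direction: sections of meager sets are meager, generically. -/
theorem ku_meager [SecondCountableTopology B] {M : Set (A × B)} (hM : IsMeagre M) :
    ∀ᵇ a : A, IsMeagre {b | (a, b) ∈ M} := by
  obtain ⟨S, hSnwd, hSc, hMsub⟩ := isMeagre_iff_countable_union_isNowhereDense.mp hM
  rcases S.eq_empty_or_nonempty with rfl | hne
  · rw [sUnion_empty, subset_empty_iff] at hMsub
    filter_upwards with a; simp [hMsub, IsMeagre.empty]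
  rcases hSc.exists_eq_range hne with ⟨f, rfl⟩
  have h1 : ∀ n, ∀ᵇ a : A, IsMeagre {b | (a, b) ∈ closure (f n)} := by
    intro n
    have h2 := (hSnwd _ ⟨n, rfl⟩).closure
    rw [IsNowhereDense, closure_closure] at h2
    exact ku_closed isClosed_closure h2
  have : (⋂ n, {a : A | IsMeagre {b | (a, b) ∈ closure (f n)}}) ∈ residual A := countable_iInter_mem.mpr h1
  refine mem_of_superset this fun a ha => ?_
  simp only [mem_iInter, mem_setOf_eq] at ha
  refine (isMeagre_iUnion (f := fun n => {b | (a,b) ∈ closure (f n)}) ha).mono fun b hb => ?_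
  obtain ⟨t, ⟨n, rfl⟩, hbt⟩ := hMsub hb
  exact mem_iUnion.mpr ⟨n, subset_closure hbt⟩


/-- meagerness transfers under preimage by a homeomorphism-like swap -/
lemma isMeagre_swap {M : Set (A × B)} (hM : IsMeagre M) :
    IsMeagre {p : B × A | (p.2, p.1) ∈ M} :=
  hM.preimage_of_isOpenMap (Homeomorph.prodComm B A).continuous
    (Homeomorph.prodComm B A).isOpenMap

/-- Kuratowski–Ulam, easy direction, sections in the first coordinate. -/
theorem ku_meager' [SecondCountableTopology A] {M : Set (A × B)} (hM : IsMeagre M) :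
    ∀ᵇ b : B, IsMeagre {a | (a, b) ∈ M} :=
  ku_meager (isMeagre_swap hM)


lemma IsMeagre.union' {s t : Set A} (hs : IsMeagre s) (ht : IsMeagre t) :
    IsMeagre (s ∪ t) := by
  rw [IsMeagre, compl_union]; exact inter_mem hs ht

lemma nonmeager_diff_meager [BaireSpace A] {U M : Set A} (hU : IsOpen U)
    (hne : U.Nonempty) (hM : IsMeagre M) : ¬ IsMeagre (U \ M) := fun h =>
  not_isMeagre_of_isOpen hU hne ((h.union' hM).mono
    (fun x hx => by by_cases hxM : x ∈ M
                    · exact Or.inr hxM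
                    · exact Or.inl ⟨hx, hxM⟩))

/-- Kuratowski–Ulam converse: a Baire-measurable set with meager sections is meager. -/
theorem ku_converse [BaireSpace A] [BaireSpace B] [SecondCountableTopology B]
    {S : Set (A × B)} (hS : BaireMeasurableSet S)
    (h : ∀ᵇ a : A, IsMeagre {b | (a, b) ∈ S}) : IsMeagre S := by
  obtain ⟨W, hWo, hSW⟩ := hS.residualEq_isOpen
  have hM : IsMeagre {p | ¬ (p ∈ S ↔ p ∈ W)} := by
    rw [IsMeagre]
    refine mem_of_superset hSW fun p hp => ?_
    simp only [mem_compl_iff, mem_setOf_eq, not_not]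
    exact iff_of_eq hp
  set M := {p : A × B | ¬ (p ∈ S ↔ p ∈ W)} with hMdef
  by_contra hSnm
  have hWne : W.Nonempty := by
    rcases W.eq_empty_or_nonempty with rfl | h'
    · refine absurd (hM.mono fun p hp => ?_) hSnm
      simp only [hMdef, mem_setOf_eq, mem_empty_iff_false, iff_false, not_not] at hp ⊢
      exact hp
    · exact h'
  obtain ⟨w, hw⟩ := hWne
  obtain ⟨V, V', hVo, hV'o, hwV, hwV', hbox⟩ := isOpen_prod_iff.mp hWo w.1 w.2 hw
  have hMsec := ku_meager hM
  have hres : ({a : A | IsMeagre {b | (a,b) ∈ M}} ∩ {a | IsMeagre {b | (a,b) ∈ S}}) ∈ residual A :=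
    inter_mem hMsec h
  obtain ⟨a, haV, haM, haS⟩ :
      ∃ a, a ∈ V ∧ IsMeagre {b | (a,b) ∈ M} ∧ IsMeagre {b | (a,b) ∈ S} := by
    obtain ⟨a, ha1, ha2⟩ := (dense_of_mem_residual hres).inter_open_nonempty V hVo ⟨w.1, hwV⟩
    exact ⟨a, ha1, ha2.1, ha2.2⟩

  refine nonmeager_diff_meager hV'o ⟨w.2, hwV'⟩ haM (haS.mono ?_)
  intro b hb
  have hbW : (a, b) ∈ W := hbox ⟨haV, hb.1⟩
  have hiff : ((a,b) ∈ S ↔ (a,b) ∈ W) := not_not.mp hb.2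
  exact hiff.mpr hbW


/-- Kuratowski–Ulam converse, sections in the first coordinate. -/
theorem ku_converse' [BaireSpace A] [BaireSpace B] [SecondCountableTopology A]
    {S : Set (A × B)} (hS : BaireMeasurableSet S)
    (h : ∀ᵇ b : B, IsMeagre {a | (a, b) ∈ S}) : IsMeagre S := by
  have hS' : BaireMeasurableSet {p : B × A | (p.2, p.1) ∈ S} :=
    hS.preimage (Homeomorph.prodComm B A).continuous (Homeomorph.prodComm B A).isOpenMap
  have := ku_converse hS' h
  have h2 : IsMeagre {p : A × B | ((p.2, p.1) : B × A) ∈ {p : B × A | (p.2, p.1) ∈ S}} :=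
    isMeagre_swap this
  exact h2.mono fun p hp => by simpa using hp

end KU

set_option linter.unusedSectionVars false

section Hull
variable {Z : Type*} [TopologicalSpace Z] [SecondCountableTopology Z]

lemma isMeagre_iUnion'' {s : ℕ → Set Z} (h : ∀ n, IsMeagre (s n)) : IsMeagre (⋃ n, s n) := by
  rw [IsMeagre, compl_iUnion]; exact countable_iInter_mem.mpr h

/-- The "Baire hull kernel": points where `S` is locally nonmeager. -/
def bhull (S : Set Z) : Set Z := {z | ∀ U : Set Z, IsOpen U → z ∈ U → ¬ IsMeagre (S ∩ U)}

lemma bhull_closed (S : Set Z) : IsClosed (bhull S) := by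
  rw [← isOpen_compl_iff]
  rw [isOpen_iff_forall_mem_open]
  intro z hz
  simp only [bhull, mem_compl_iff, mem_setOf_eq, not_forall, not_not] at hz
  obtain ⟨U, hUo, hzU, hUm⟩ := hz
  exact ⟨U, fun z' hz'U h => absurd (h U hUo hz'U) (not_not.mpr hUm), hUo, hzU⟩

lemma bhull_subset_closure (S : Set Z) : bhull S ⊆ closure S := by
  intro z hz
  rw [mem_closure_iff]
  intro U hUo hzU
  by_contra h
  rw [not_nonempty_iff_eq_empty] at h
  exact hz U hUo hzU (by rw [inter_comm] at h; simp [h, IsMeagre.empty])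

lemma diff_bhull_meager (S : Set Z) : IsMeagre (S \ bhull S) := by
  obtain ⟨𝒱, h𝒱c, h𝒱ne, h𝒱b⟩ := exists_countable_basis Z
  set B := {V ∈ 𝒱 | IsMeagre (S ∩ V)} with hB
  have hsub : S \ bhull S ⊆ ⋃₀ ((fun V => S ∩ V) '' B) := by
    intro z hz
    obtain ⟨hzS, hznh⟩ := hz
    simp only [bhull, mem_setOf_eq, not_forall, not_not] at hznh
    obtain ⟨U, hUo, hzU, hUm⟩ := hznh
    obtain ⟨V, hV𝒱, hzV, hVU⟩ := h𝒱b.exists_subset_of_mem_open hzU hUo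
    exact ⟨S ∩ V, ⟨V, ⟨hV𝒱, hUm.mono (inter_subset_inter_right _ hVU)⟩, rfl⟩, hzS, hzV⟩
  refine isMeagre_of_subset_sUnion ?_ ?_ hsub
  · exact (h𝒱c.mono (sep_subset _ _)).image _
  · rintro t ⟨V, hV, rfl⟩; exact hV.2

/-- Minimality of the hull: any Baire measurable superset of `S` contains `bhull S`
modulo a meager set. -/
lemma bhull_minimal {S B : Set Z} (hB : BaireMeasurableSet B) (hSB : S ⊆ B) :
    IsMeagre (bhull S \ B) := by
  obtain ⟨W, hWo, hBW⟩ := hB.residualEq_isOpen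
  have hM : IsMeagre {p | ¬ (p ∈ B ↔ p ∈ W)} := by
    rw [IsMeagre]
    refine mem_of_superset hBW fun p hp => ?_
    simp only [mem_compl_iff, mem_setOf_eq, not_not]
    exact iff_of_eq hp
  set M := {p : Z | ¬ (p ∈ B ↔ p ∈ W)} with hMdef
  have hfr : IsMeagre (closure W \ W) := by
    refine IsNowhereDense.isMeagre' ?_
    rw [IsNowhereDense]
    have hcl : IsClosed (closure W \ W) := isClosed_closure.sdiff hWo
    rw [hcl.closure_eq]
    rw [eq_empty_iff_forall_notMem]
    intro x hx
    have h1 : interior (closure W \ W) ⊆ closure W := interior_subset.trans diff_subset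
    have h2 : IsOpen (interior (closure W \ W)) := isOpen_interior
    -- an open subset of closure W must meet W if nonempty
    have h3 : (interior (closure W \ W) ∩ W).Nonempty := by
      rcases mem_closure_iff.mp (h1 hx) (interior (closure W \ W)) h2 hx with ⟨y, hy1, hy2⟩
      exact ⟨y, hy1, hy2⟩
    obtain ⟨y, hy1, hy2⟩ := h3
    exact (interior_subset hy1).2 hy2
  have hempty : bhull S \ closure W = ∅ := by
    rw [eq_empty_iff_forall_notMem]
    intro z hz
    refine hz.1 (closure W)ᶜ isClosed_closure.isOpen_compl hz.2 ?_
    refine hM.mono fun p hp => ?_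
    have hpS : p ∈ S := hp.1
    have hpW : p ∉ W := fun h => hp.2 (subset_closure h)
    simp only [hMdef, mem_setOf_eq]
    intro h
    exact hpW (h.mp (hSB hpS))
  refine ((hfr.union' hM).mono ?_ : IsMeagre (bhull S \ B))
  intro z hz
  by_cases h1 : z ∈ W
  · -- z ∈ W but z ∉ B : z ∈ M
    right
    simp only [hMdef, mem_setOf_eq]
    intro h
    exact hz.2 (h.mpr h1)
  · -- z ∉ W : z ∈ closure W (else contradicts hempty), so in frontier
    have h2 : z ∈ closure W := by
      by_contra h2
      rw [eq_empty_iff_forall_notMem] at hempty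
      exact hempty z ⟨hz.1, h2⟩
    exact Or.inl ⟨h2, h1⟩

end Hull

section Proj

open Topology Set Filter TopologicalSpace List

variable {K Z : Type*} [TopologicalSpace K] [TopologicalSpace Z]
  [CompactSpace K] [CompactSpace Z] [T2Space K] [T2Space Z]
  [SecondCountableTopology K] [SecondCountableTopology Z]

/-- Projections of Gδ subsets of a compact product are Baire measurable. -/
theorem baireMeasurableSet_snd_image_gdelta
    {Q : Set (K × Z)} (hQ : IsGδ Q) :
    BaireMeasurableSet (Prod.snd '' Q) := by
  classical
  -- Step 1: Q = ⋂ n, O n with O n open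
  obtain ⟨T, hTo, hTc, rfl⟩ := hQ
  obtain ⟨O, hOrange⟩ : ∃ O : ℕ → Set (K × Z), insert univ T = range O :=
    ((hTc.insert univ).exists_eq_range (insert_nonempty _ _)).imp fun _ h => h
  have hOopen : ∀ n, IsOpen (O n) := by
    intro n
    have : O n ∈ insert univ T := hOrange ▸ mem_range_self n
    rcases this with h | h
    · rw [h]; exact isOpen_univ
    · exact hTo _ h
  have hQ_eq : ⋂₀ T = ⋂ n, O n := by
    rw [← sInter_range, ← hOrange, sInter_insert, univ_inter]
  rw [hQ_eq] at *
  set Q := ⋂ n, O n with hQdef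
  -- Step 2: countable basis
  obtain ⟨𝒱, h𝒱c, h𝒱ne, h𝒱b⟩ := exists_countable_basis (K × Z)
  obtain ⟨V, hVrange⟩ : ∃ V : ℕ → Set (K × Z), insert ∅ 𝒱 = range V :=
    ((h𝒱c.insert ∅).exists_eq_range (insert_nonempty _ _)).imp fun _ h => h
  have hVopen : ∀ i, IsOpen (V i) := by
    intro i
    have : V i ∈ insert ∅ 𝒱 := hVrange ▸ mem_range_self i
    rcases this with h | h
    · rw [h]; exact isOpen_empty
    · exact h𝒱b.isOpen h
  have hVcover : ∀ (q : K × Z) (r : ℕ), q ∈ O r → ∃ i, q ∈ V i ∧ closure (V i) ⊆ O r := by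
    intro q r hq
    obtain ⟨F, hFnhds, hFcl, hFsub⟩ :=
      exists_mem_nhds_isClosed_subset ((hOopen r).mem_nhds hq)
    obtain ⟨W, hW𝒱, hqW, hWsub⟩ :=
      h𝒱b.exists_subset_of_mem_open (mem_interior_iff_mem_nhds.mpr hFnhds) isOpen_interior
    have : W ∈ insert ∅ 𝒱 := mem_insert_of_mem _ hW𝒱
    rw [hVrange] at this
    obtain ⟨i, rfl⟩ := this
    exact ⟨i, hqW, (closure_mono (hWsub.trans interior_subset)).trans
      (by rw [hFcl.closure_eq]; exact hFsub)⟩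
  -- Step 3: the Souslin scheme
  -- condition on finite sequences
  set cond : List ℕ → Prop := fun s => ∀ (r : Fin s.length), closure (V (s.get r)) ⊆ O r with hcond
  set CS : List ℕ → Set (K × Z) := fun s => ⋂ (r : Fin s.length), closure (V (s.get r)) with hCS
  set KS : List ℕ → Set Z := fun s => if cond s then Prod.snd '' (CS s) else ∅ with hKS
  have hCSclosed : ∀ s, IsClosed (CS s) := fun s => isClosed_iInter fun r => isClosed_closure
  have hKSclosed : ∀ s, IsClosed (KS s) := by
    intro s
    rw [hKS]
    dsimp only
    split_ifs with h
    · exact (((hCSclosed s).isCompact).image continuous_snd).isClosed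
    · exact isClosed_empty
  -- appending decreases
  have hCSappend : ∀ s t, CS (s ++ t) ⊆ CS s := by
    intro s t p hp
    simp only [hCS, mem_iInter] at hp ⊢
    intro r
    have hr : (r : ℕ) < (s ++ t).length := by
      rw [List.length_append]; exact lt_of_lt_of_le r.isLt (Nat.le_add_right _ _)
    have := hp ⟨r, hr⟩
    rwa [List.get_eq_getElem, List.getElem_append_left r.isLt] at this
  have hcondappend : ∀ s t, cond (s ++ t) → cond s := by
    intro s t h r
    have hr : (r : ℕ) < (s ++ t).length := by
      rw [List.length_append]; exact lt_of_lt_of_le r.isLt (Nat.le_add_right _ _)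
    have := h ⟨r, hr⟩
    simp only at this
    rwa [List.get_eq_getElem, List.getElem_append_left r.isLt] at this
  have hKSappend : ∀ s t, KS (s ++ t) ⊆ KS s := by
    intro s t x hx
    rw [hKS] at hx ⊢
    dsimp only at hx ⊢
    split_ifs at hx with h
    · rw [if_pos (hcondappend s t h)]
      exact image_mono (hCSappend s t) hx
    · exact absurd hx (notMem_empty x)
  -- chains
  have hchainlen : ∀ (v : ℕ → ℕ) (r : ℕ), ((List.range r).map v).length = r := by
    intro v r; simp
  have hchainget : ∀ (v : ℕ → ℕ) (r : ℕ) (j : Fin ((List.range r).map v).length),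
      ((List.range r).map v).get j = v j := by
    intro v r j
    simp [List.get_eq_getElem, List.getElem_map, List.getElem_range]
  -- (F4) key compactness fact
  have key : ∀ (v : ℕ → ℕ) (x : Z), (∀ r, x ∈ KS ((List.range r).map v)) →
      x ∈ Prod.snd '' Q := by
    intro v x hx
    have hcondall : ∀ r, cond ((List.range r).map v) := by
      intro r
      by_contra h
      have := hx r
      rw [hKS] at this
      dsimp only at this
      rw [if_neg h] at this
      exact this
    set Fib : ℕ → Set (K × Z) :=
      fun r => CS ((List.range r).map v) ∩ Prod.snd ⁻¹' {x} with hFib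
    have hFibclosed : ∀ r, IsClosed (Fib r) :=
      fun r => (hCSclosed _).inter (isClosed_singleton.preimage continuous_snd)
    have hFibcompact : ∀ r, IsCompact (Fib r) := fun r => (hFibclosed r).isCompact
    have hFibne : ∀ r, (Fib r).Nonempty := by
      intro r
      have := hx r
      rw [hKS] at this
      dsimp only at this
      rw [if_pos (hcondall r)] at this
      obtain ⟨p, hp1, hp2⟩ := this
      exact ⟨p, hp1, hp2⟩
    have hFibanti : Antitone Fib := by
      refine antitone_nat_of_succ_le fun r => ?_
      refine inter_subset_inter_left _ ?_
      have : (List.range (r+1)).map v = (List.range r).map v ++ [v r] := by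
        rw [List.range_succ, List.map_append]; rfl
      rw [this]
      exact hCSappend _ _
    obtain ⟨p, hp⟩ := IsCompact.nonempty_iInter_of_directed_nonempty_isCompact_isClosed
      Fib (fun i j => ⟨max i j, hFibanti (le_max_left i j), hFibanti (le_max_right i j)⟩)
      hFibne hFibcompact hFibclosed
    simp only [mem_iInter] at hp
    have hpQ : p ∈ Q := by
      rw [hQdef, mem_iInter]
      intro r
      have hp1 := (hp (r+1)).1
      rw [hCS, mem_iInter] at hp1
      have hlen : r < ((List.range (r+1)).map v).length := by rw [hchainlen]; omega
      have h2 := hp1 ⟨r, hlen⟩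
      have h3 := hcondall (r+1) ⟨r, hlen⟩
      exact h3 h2
    have hpx : p.2 = x := (hp 0).2
    exact ⟨p, hpQ, hpx⟩
  -- the scheme sets
  set AS : List ℕ → Set Z :=
    fun s => ⋃ v : ℕ → ℕ, ⋂ r, KS (s ++ (List.range r).map v) with hAS
  -- (F3)
  have hASsub : ∀ s, AS s ⊆ KS s := by
    intro s x hx
    rw [hAS, mem_iUnion] at hx
    obtain ⟨v, hv⟩ := hx
    have := mem_iInter.mp hv 0
    simpa using this
  -- (F1) ⊇
  have hAsup : Prod.snd '' Q ⊆ AS [] := by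
    rintro x ⟨q, hq, rfl⟩
    have hq' : ∀ r, q ∈ O r := by
      rw [hQdef, mem_iInter] at hq; exact hq
    have : ∀ r, ∃ i, q ∈ V i ∧ closure (V i) ⊆ O r := fun r => hVcover q r (hq' r)
    choose b hb1 hb2 using this
    rw [hAS, mem_iUnion]
    refine ⟨b, mem_iInter.mpr fun r => ?_⟩
    rw [List.nil_append, hKS]
    dsimp only
    have hcondb : cond ((List.range r).map b) := by
      intro j
      rw [hchainget]
      exact fun p hp => hb2 _ hp
    rw [if_pos hcondb]
    refine ⟨q, ?_, rfl⟩
    rw [hCS, mem_iInter]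
    intro j
    rw [hchainget]
    exact subset_closure (hb1 _)
  -- (F1) ⊆
  have hAsub : AS [] ⊆ Prod.snd '' Q := by
    intro x hx
    rw [hAS, mem_iUnion] at hx
    obtain ⟨v, hv⟩ := hx
    refine key v x fun r => ?_
    have := mem_iInter.mp hv r
    rwa [List.nil_append] at this
  -- (F2)
  have hASunion : ∀ s, AS s = ⋃ n, AS (s ++ [n]) := by
    intro s
    apply Subset.antisymm
    · intro x hx
      rw [hAS, mem_iUnion] at hx
      obtain ⟨v, hv⟩ := hx
      rw [mem_iUnion]
      refine ⟨v 0, ?_⟩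
      rw [hAS, mem_iUnion]
      refine ⟨fun i => v (i+1), mem_iInter.mpr fun r => ?_⟩
      have heq : (s ++ [v 0]) ++ (List.range r).map (fun i => v (i+1)) =
          s ++ (List.range (r+1)).map v := by
        rw [List.range_succ_eq_map, List.map_cons, List.map_map, List.append_assoc]
        rfl
      rw [heq]
      exact mem_iInter.mp hv (r+1)
    · intro x hx
      rw [mem_iUnion] at hx
      obtain ⟨n, hx⟩ := hx
      rw [hAS, mem_iUnion] at hx
      obtain ⟨v', hv'⟩ := hx
      rw [hAS, mem_iUnion]
      refine ⟨fun i => Nat.casesOn i n v', mem_iInter.mpr fun r => ?_⟩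
      match r with
      | 0 =>
        simp only [List.range_zero, List.map_nil, List.append_nil]
        have := mem_iInter.mp hv' 0
        simp only [List.range_zero, List.map_nil, List.append_nil] at this
        exact hKSappend s [n] this
      | (r+1) =>
        have heq : s ++ (List.range (r+1)).map (fun i => Nat.casesOn i n v') =
            (s ++ [n]) ++ (List.range r).map v' := by
          rw [List.range_succ_eq_map, List.map_cons, List.map_map, List.append_assoc]
          rfl
        rw [heq]
        exact mem_iInter.mp hv' r
  -- hull assembly
  have hclosedBM : ∀ {F : Set Z}, IsClosed F → BaireMeasurableSet F :=
    fun h => (h.isOpen_compl.baireMeasurableSet).of_compl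
  set HS : List ℕ → Set Z := fun s => bhull (AS s) ∪ AS s with hHS
  have hHSbm : ∀ s, BaireMeasurableSet (HS s) := by
    intro s
    have : HS s = bhull (AS s) ∪ (AS s \ bhull (AS s)) := by
      rw [hHS]; dsimp only; rw [union_diff_self]
    rw [this]
    exact (hclosedBM (bhull_closed _)).union (diff_bhull_meager _).baireMeasurableSet
  have hHSsub : ∀ s, HS s ⊆ KS s := by
    intro s
    rw [hHS]
    dsimp only
    rw [union_subset_iff]
    constructor
    · exact (bhull_subset_closure _).trans
        ((closure_mono (hASsub s)).trans (hKSclosed s).closure_eq.subset)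
    · exact hASsub s
  have hMS : ∀ s : List ℕ, IsMeagre (HS s \ ⋃ n, HS (s ++ [n])) := by
    intro s
    have hBbm : BaireMeasurableSet (⋃ n, HS (s ++ [n])) :=
      BaireMeasurableSet.iUnion fun n => hHSbm _
    have hsubB : AS s ⊆ ⋃ n, HS (s ++ [n]) := by
      rw [hASunion s]
      exact iUnion_mono fun n => subset_union_right
    have h1 : IsMeagre (bhull (AS s) \ ⋃ n, HS (s ++ [n])) := bhull_minimal hBbm hsubB
    refine h1.mono ?_
    intro z hz
    rcases hz.1 with h | h
    · exact ⟨h, hz.2⟩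
    · exact absurd (hsubB h) hz.2
  have htotal : IsMeagre (⋃ s : List ℕ, (HS s \ ⋃ n, HS (s ++ [n]))) := by
    rw [IsMeagre, compl_iUnion]
    exact countable_iInter_mem.mpr hMS
  -- recursion
  have hrec : HS [] \ (⋃ s : List ℕ, (HS s \ ⋃ n, HS (s ++ [n]))) ⊆ Prod.snd '' Q := by
    intro x hx
    obtain ⟨hxH, hxM⟩ := hx
    have step : ∀ s, x ∈ HS s → ∃ n, x ∈ HS (s ++ [n]) := by
      intro s hs
      by_contra hno
      push_neg at hno
      exact hxM (mem_iUnion.mpr ⟨s, hs, fun h => by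
        obtain ⟨n, hn⟩ := mem_iUnion.mp h
        exact hno n hn⟩)
    choose! f hf using step
    set g : ℕ → List ℕ := fun r => Nat.rec [] (fun _ s => s ++ [f s]) r with hgdef
    have hg : ∀ r, x ∈ HS (g r) := by
      intro r
      induction r with
      | zero => exact hxH
      | succ r ih => exact hf (g r) ih
    set v : ℕ → ℕ := fun r => f (g r) with hvdef
    have hgv : ∀ r, g r = (List.range r).map v := by
      intro r
      induction r with
      | zero => simp [hgdef]
      | succ r ih =>
        show g r ++ [f (g r)] = _
        rw [List.range_succ, List.map_append, ← ih]
        rfl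
    exact key v x fun r => by
      have := hHSsub (g r) (hg r)
      rwa [hgv r] at this
  -- conclude
  have hQsub : Prod.snd '' Q ⊆ HS [] := hAsup.trans subset_union_right
  have hmeag : IsMeagre (HS [] \ Prod.snd '' Q) :=
    htotal.mono fun z hz => by_contra fun h => hz.2 (hrec ⟨hz.1, h⟩)
  refine (hHSbm []).congr ?_
  rw [Filter.eventuallyEq_set]
  have hres : (HS [] \ Prod.snd '' Q)ᶜ ∈ residual Z := hmeag
  filter_upwards [hres] with z hz
  constructor
  · intro h
    by_contra h2
    exact hz ⟨h, h2⟩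
  · intro h
    exact hQsub h

end Proj

section LocConst

open Topology Set Filter TopologicalSpace

variable {K Z Y : Type*} [TopologicalSpace K] [TopologicalSpace Z] [TopologicalSpace Y]
  [CompactSpace K] [CompactSpace Z] [T2Space K] [T2Space Z] [T2Space Y]
  [SecondCountableTopology K] [SecondCountableTopology Z]
  [BaireSpace K] [BaireSpace Z]

lemma IsGδ.preimage' {X X' : Type*} [TopologicalSpace X] [TopologicalSpace X']
    {s : Set X'} (h : IsGδ s) {f : X → X'} (hf : Continuous f) : IsGδ (f ⁻¹' s) := by
  obtain ⟨T, hTo, hTc, rfl⟩ := h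
  rw [preimage_sInter]
  exact IsGδ.biInter hTc fun t ht => ((hTo t ht).preimage hf).isGδ

theorem loc_const_generic (ψ : K × Z → Y) (𝒞 : Set (K × Z)) (h𝒞 : IsGδ 𝒞)
    (hcom : IsMeagre 𝒞ᶜ) (hcont : ContinuousOn ψ 𝒞)
    (hcount : ∀ t : Z, ∃ zseq : ℕ → Y, ∀ s : K, ∃ i, ψ (s, t) = zseq i) :
    IsMeagre (𝒞 \ {p | ∃ U : Set K, IsOpen U ∧ p.1 ∈ U ∧
      ∀ s' ∈ U, (s', p.2) ∈ 𝒞 → ψ (s', p.2) = ψ p}) := by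
  classical
  set Lset := {p : K × Z | ∃ U : Set K, IsOpen U ∧ p.1 ∈ U ∧
      ∀ s' ∈ U, (s', p.2) ∈ 𝒞 → ψ (s', p.2) = ψ p} with hLset
  -- countable basis of K
  obtain ⟨𝒱, h𝒱c, h𝒱ne, h𝒱b⟩ := exists_countable_basis K
  obtain ⟨B, hBrange⟩ : ∃ B : ℕ → Set K, insert ∅ 𝒱 = range B :=
    ((h𝒱c.insert ∅).exists_eq_range (insert_nonempty _ _)).imp fun _ h => h
  have hBopen : ∀ m, IsOpen (B m) := by
    intro m
    have : B m ∈ insert ∅ 𝒱 := hBrange ▸ mem_range_self m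
    rcases this with h | h
    · rw [h]; exact isOpen_empty
    · exact h𝒱b.isOpen h
  -- the analytic pieces
  set R : ℕ → Set (K × Z) := fun m =>
    {p | p ∈ 𝒞 ∧ ∃ s' ∈ B m, (s', p.2) ∈ 𝒞 ∧ ψ (s', p.2) ≠ ψ p} with hR
  have hRbm : ∀ m, BaireMeasurableSet (R m) := by
    intro m
    set Q : Set (K × (K × Z)) := {q | q.1 ∈ B m ∧ q.2 ∈ 𝒞 ∧ (q.1, q.2.2) ∈ 𝒞 ∧
      ψ (q.1, q.2.2) ≠ ψ q.2} with hQ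
    have himg : R m = Prod.snd '' Q := by
      ext p
      constructor
      · rintro ⟨hp𝒞, s', hs'B, hs'𝒞, hne⟩
        exact ⟨(s', p), ⟨hs'B, hp𝒞, hs'𝒞, hne⟩, rfl⟩
      · rintro ⟨⟨s', p'⟩, ⟨h1, h2, h3, h4⟩, rfl⟩
        exact ⟨h2, s', h1, h3, h4⟩
    rw [himg]
    apply baireMeasurableSet_snd_image_gdelta
    -- Q is Gδ
    have hg2 : Continuous (fun q : K × (K × Z) => q.2) := continuous_snd
    have hg3 : Continuous (fun q : K × (K × Z) => (q.1, q.2.2)) :=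
      continuous_fst.prodMk (continuous_snd.comp continuous_snd)
    set 𝔾 : Set (K × (K × Z)) :=
      {q | q.1 ∈ B m ∧ q.2 ∈ 𝒞 ∧ (q.1, q.2.2) ∈ 𝒞} with h𝔾
    have h𝔾gd : IsGδ 𝔾 := by
      have h1 : IsGδ {q : K × (K × Z) | q.1 ∈ B m} :=
        ((hBopen m).preimage continuous_fst).isGδ
      have h2 : IsGδ {q : K × (K × Z) | q.2 ∈ 𝒞} := h𝒞.preimage' hg2
      have h3 : IsGδ {q : K × (K × Z) | (q.1, q.2.2) ∈ 𝒞} := h𝒞.preimage' hg3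
      have : 𝔾 = {q : K × (K × Z) | q.1 ∈ B m} ∩
          ({q : K × (K × Z) | q.2 ∈ 𝒞} ∩ {q : K × (K × Z) | (q.1, q.2.2) ∈ 𝒞}) := by
        ext q; simp [h𝔾, mem_inter_iff, and_assoc]
      rw [this]
      exact h1.inter (h2.inter h3)
    -- the inequality part is relatively open in 𝔾
    have hu : ContinuousOn (fun q : K × (K × Z) => (ψ (q.1, q.2.2), ψ q.2)) 𝔾 := by
      apply ContinuousOn.prodMk
      · exact hcont.comp hg3.continuousOn fun q hq => hq.2.2
      · exact hcont.comp hg2.continuousOn fun q hq => hq.2.1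
    have hopen : IsOpen {y : Y × Y | y.1 ≠ y.2} := isOpen_ne_fun continuous_fst continuous_snd
    obtain ⟨O, hOopen, hOeq⟩ := (continuousOn_iff'.mp hu) _ hopen
    have hQO : Q = O ∩ 𝔾 := by
      rw [← hOeq]
      ext q
      simp only [hQ, h𝔾, mem_setOf_eq, mem_inter_iff, mem_preimage]
      tauto
    rw [hQO]
    exact hOopen.isGδ.inter h𝔾gd
  -- identification of the bad set
  have hbadeq : 𝒞 \ Lset = 𝒞 ∩ ⋂ m, ({p : K × Z | p.1 ∈ B m}ᶜ ∪ R m) := by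
    ext p
    simp only [mem_diff, mem_inter_iff, mem_iInter, mem_union, mem_compl_iff, mem_setOf_eq]
    constructor
    · rintro ⟨hp𝒞, hnL⟩
      refine ⟨hp𝒞, fun m => ?_⟩
      by_cases hmem : p.1 ∈ B m
      · right
        refine ⟨hp𝒞, ?_⟩
        by_contra hno
        push_neg at hno
        exact hnL ⟨B m, hBopen m, hmem, fun s' hs' h𝒞' => hno s' hs' h𝒞'⟩
      · exact Or.inl hmem
    · rintro ⟨hp𝒞, hall⟩
      refine ⟨hp𝒞, fun hL => ?_⟩
      obtain ⟨U, hUo, hpU, hgood⟩ := hL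
      obtain ⟨W, hW𝒱, hpW, hWU⟩ := h𝒱b.exists_subset_of_mem_open hpU hUo
      have : W ∈ insert ∅ 𝒱 := mem_insert_of_mem _ hW𝒱
      rw [hBrange] at this
      obtain ⟨m, rfl⟩ := this
      rcases hall m with h | h
      · exact h hpW
      · obtain ⟨_, s', hs'B, hs'𝒞, hne⟩ := h
        exact hne (hgood s' (hWU hs'B) hs'𝒞)
  -- Baire measurability of the bad set
  have h𝒞bm : BaireMeasurableSet 𝒞 := by
    obtain ⟨T, hTo, hTc, rfl⟩ := h𝒞
    exact BaireMeasurableSet.sInter hTc fun t ht => (hTo t ht).baireMeasurableSet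
  have hbadbm : BaireMeasurableSet (𝒞 \ Lset) := by
    rw [hbadeq]
    exact h𝒞bm.inter (BaireMeasurableSet.iInter fun m =>
      ((continuous_fst.isOpen_preimage _ (hBopen m)).baireMeasurableSet.compl).union (hRbm m))
  -- sections are meager
  have hgood : ∀ᵇ t : Z, IsMeagre {s : K | (s, t) ∈ 𝒞ᶜ} := ku_meager' hcom
  have hsec : ∀ᵇ t : Z, IsMeagre {s : K | (s, t) ∈ 𝒞 \ Lset} := by
    filter_upwards [hgood] with t ht
    -- fix t; countable fiber partition
    obtain ⟨zseq, hz⟩ := hcount t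
    set Di : ℕ → Set K := fun i => {s | (s, t) ∈ 𝒞 ∧ ψ (s, t) = zseq i} with hDi
    set N : Set K := ⋃ i, (closure (Di i) \ interior (closure (Di i))) with hN
    have hNmeag : IsMeagre N := by
      refine isMeagre_iUnion fun i => IsNowhereDense.isMeagre' ?_
      have hcl : IsClosed (closure (Di i) \ interior (closure (Di i))) :=
        isClosed_closure.sdiff isOpen_interior
      rw [hcl.isNowhereDense_iff, eq_empty_iff_forall_notMem]
      intro x hx
      have h1 : interior (closure (Di i) \ interior (closure (Di i))) ⊆
          interior (closure (Di i)) := interior_mono diff_subset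
      exact (interior_subset (s := closure (Di i) \ interior (closure (Di i))) hx).2 (h1 hx)
    -- section of bad ⊆ N
    refine hNmeag.mono fun s hs => ?_
    obtain ⟨hs𝒞, hsL⟩ := hs
    obtain ⟨i, hi⟩ := hz s
    have hsDi : s ∈ Di i := ⟨hs𝒞, hi⟩
    rw [hN, mem_iUnion]
    refine ⟨i, subset_closure hsDi, fun hint => ?_⟩
    -- if s is in the interior, we get a good open set, contradiction
    apply hsL
    refine ⟨interior (closure (Di i)), isOpen_interior, hint, fun s' hs' h𝒞' => ?_⟩
    -- s' ∈ closure (Di i) and (s', t) ∈ 𝒞 : continuity forces ψ (s', t) = zseq i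
    have hθ : ContinuousOn (fun s : K => ψ (s, t)) {s | (s, t) ∈ 𝒞} :=
      hcont.comp (Continuous.continuousOn (by continuity)) fun s h => h
    have hcwa : ContinuousWithinAt (fun s : K => ψ (s, t)) (Di i) s' :=
      (hθ s' h𝒞').mono fun u hu => hu.1
    have hmem := hcwa.mem_closure_image (interior_subset hs')
    have himg : (fun s : K => ψ (s, t)) '' Di i ⊆ {zseq i} := by
      rintro _ ⟨u, hu, rfl⟩; exact hu.2
    have : ψ (s', t) ∈ closure {zseq i} := closure_mono himg hmem
    rw [closure_singleton] at this
    rw [mem_singleton_iff] at this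
    rw [this, hi]
  exact ku_converse' hbadbm hsec

end LocConst

section Plumbing

open Topology Set Filter TopologicalSpace

/-- The ambient space of the statement. -/
abbrev Pt : Type := ℕ → ℕ → Bool

/-- Heads: the first `k` columns. -/
abbrev Hd (k : ℕ) : Type := Fin k → ℕ → Bool

/-- Splitting a point into its first `k` columns and its tail. -/
def ek (k : ℕ) : Pt ≃ₜ Hd k × Pt where
  toFun x := (fun i => x i, fun n => x (n + k))
  invFun p := fun n => if h : n < k then p.1 ⟨n, h⟩ else p.2 (n - k)
  left_inv x := by
    funext n
    by_cases h : n < k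
    · simp [h]
    · simp only [dif_neg h]
      show x (n - k + k) = x n
      rw [Nat.sub_add_cancel (le_of_not_gt h)]
  right_inv p := by
    refine Prod.ext ?_ ?_
    · funext i
      simp [i.isLt]
    · funext n
      have h : ¬ (n + k < k) := by omega
      simp only [dif_neg h]
      show p.2 (n + k - k) = p.2 n
      rw [Nat.add_sub_cancel]
  continuous_toFun := by
    apply Continuous.prodMk
    · exact continuous_pi fun i => continuous_apply (i : ℕ)
    · exact continuous_pi fun n => continuous_apply (n + k)
  continuous_invFun := by
    apply continuous_pi
    intro n
    by_cases h : n < k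
    · simp only [dif_pos h]
      exact (continuous_apply (⟨n, h⟩ : Fin k)).comp continuous_fst
    · simp only [dif_neg h]
      exact (continuous_apply (n - k)).comp continuous_snd

lemma ek_symm_lt {k : ℕ} (s : Hd k) (t : Pt) {n : ℕ} (h : n < k) :
    (ek k).symm (s, t) n = s ⟨n, h⟩ := dif_pos h

lemma ek_symm_ge {k : ℕ} (s : Hd k) (t : Pt) {n : ℕ} (h : k ≤ n) :
    (ek k).symm (s, t) n = t (n - k) := dif_neg (by omega)

lemma ek_fst {k : ℕ} (x : Pt) : (ek k x).1 = fun i : Fin k => x i := rfl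
lemma ek_snd {k : ℕ} (x : Pt) : (ek k x).2 = fun n => x (n + k) := rfl

/-- The tail map. -/
def tl (k : ℕ) : Pt → Pt := fun x n => x (n + k)

lemma tl_cont (k : ℕ) : Continuous (tl k) :=
  continuous_pi fun n => continuous_apply (n + k)

lemma tl_open (k : ℕ) : IsOpenMap (tl k) := by
  have : tl k = Prod.snd ∘ (ek k) := rfl
  rw [this]
  exact isOpenMap_snd.comp (ek k).isOpenMap

lemma ek_symm_tl {k : ℕ} (x : Pt) : (ek k).symm ((ek k x).1, tl k x) = x := by
  have : ((ek k x).1, tl k x) = ek k x := rfl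
  rw [this, Homeomorph.symm_apply_apply]

/-- cylinder lemma: basic clopen neighborhoods in products `ι → ℕ → Bool`. -/
lemma cylinder_subset {ι : Type*} (x : ι → ℕ → Bool) {U : Set (ι → ℕ → Bool)}
    (hU : IsOpen U) (hx : x ∈ U) :
    ∃ D : Set (ι × ℕ), D.Finite ∧
      {w : ι → ℕ → Bool | ∀ p ∈ D, w p.1 p.2 = x p.1 p.2} ⊆ U := by
  have h1 : U ∈ 𝓝 x := hU.mem_nhds hx
  rw [nhds_pi, Filter.mem_pi] at h1
  obtain ⟨I, hIfin, t, ht, hsub⟩ := h1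
  have h2 : ∀ i, ∃ J : Set ℕ, J.Finite ∧ {c : ℕ → Bool | ∀ m ∈ J, c m = x i m} ⊆ t i := by
    intro i
    have h3 := ht i
    rw [nhds_pi, Filter.mem_pi] at h3
    obtain ⟨J, hJfin, u, hu, hsub2⟩ := h3
    refine ⟨J, hJfin, fun c hc => hsub2 fun m hm => ?_⟩
    rw [hc m hm]
    exact mem_of_mem_nhds (hu m)
  choose J hJfin hJsub using h2
  refine ⟨⋃ i ∈ I, {i} ×ˢ (J i),
    hIfin.biUnion fun i _ => (finite_singleton i).prod (hJfin i), fun w hw => ?_⟩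
  apply hsub
  intro i hiI
  apply hJsub i
  intro m hm
  exact hw (i, m) (mem_biUnion hiI ⟨rfl, hm⟩)

/-- the set of heads whose `i0`-th column differs from `c` is open and dense. -/
lemma dense_ne_column {k : ℕ} (i0 : Fin k) (c : ℕ → Bool) :
    IsOpen {s : Hd k | s i0 ≠ c} ∧ Dense {s : Hd k | s i0 ≠ c} := by
  constructor
  · exact isOpen_ne.preimage (continuous_apply i0)
  · rw [dense_iff_inter_open]
    intro U hU ⟨s0, hs0⟩
    obtain ⟨D, hDfin, hDsub⟩ := cylinder_subset s0 hU hs0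
    -- pick m not constrained at column i0
    have hfin : {m : ℕ | (i0, m) ∈ D}.Finite := by
      refine Set.Finite.subset (hDfin.image Prod.snd) fun m hm => ⟨(i0, m), hm, rfl⟩
    obtain ⟨m, hm⟩ := (hfin.infinite_compl).nonempty
    classical
    set s1 : Hd k := fun i m' => if i = i0 ∧ m' = m then !(c m) else s0 i m' with hs1
    refine ⟨s1, ?_, ?_⟩
    · apply hDsub
      rintro ⟨i, m'⟩ hp
      simp only [hs1]
      rw [if_neg]
      rintro ⟨rfl, rfl⟩
      exact hm hp
    · intro hcol
      have h2 := congrFun hcol m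
      simp only [hs1, if_pos (And.intro rfl rfl)] at h2
      exact (Bool.not_ne_self (c m)) h2

end Plumbing

open Topology Set Filter TopologicalSpace

/-- There is no Baire measurable reduction of `E₁` to an equivalence
relation with countable classes on a Polish space. -/
theorem statement5 {Y : Type*} [TopologicalSpace Y] [PolishSpace Y]
    (F : Y → Y → Prop) (hF : Equivalence F)
    (hFcount : ∀ y : Y, {z : Y | F y z}.Countable)
    (φ : (ℕ → ℕ → Bool) → Y)
    (hφ : ∀ U : Set Y, IsOpen U → BaireMeasurableSet (φ ⁻¹' U))
    (hred : ∀ x x' : ℕ → ℕ → Bool,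
      (∃ n, ∀ m ≥ n, x m = x' m) ↔ F (φ x) (φ x')) :
    False := by
  classical
  -- ==================== Step A : continuity on a comeager Gδ set ====================
  obtain ⟨𝒰, h𝒰c, h𝒰ne, h𝒰b⟩ := exists_countable_basis Y
  obtain ⟨Us, hUsrange⟩ : ∃ Us : ℕ → Set Y, insert ∅ 𝒰 = range Us :=
    ((h𝒰c.insert ∅).exists_eq_range (insert_nonempty _ _)).imp fun _ h => h
  have hUsopen : ∀ n, IsOpen (Us n) := by
    intro n
    have : Us n ∈ insert ∅ 𝒰 := hUsrange ▸ mem_range_self n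
    rcases this with h | h
    · rw [h]; exact isOpen_empty
    · exact h𝒰b.isOpen h
  choose Vs hVsopen hVseq using fun n => (hφ _ (hUsopen n)).residualEq_isOpen
  set Md : ℕ → Set Pt := fun n => {x | ¬ (x ∈ φ ⁻¹' Us n ↔ x ∈ Vs n)} with hMd
  have hMdmeag : ∀ n, IsMeagre (Md n) := by
    intro n
    rw [IsMeagre]
    refine mem_of_superset (hVseq n) fun x hx => ?_
    simp only [mem_compl_iff, hMd, mem_setOf_eq, not_not]
    exact iff_of_eq hx
  have hMdU : IsMeagre (⋃ n, Md n) := isMeagre_iUnion hMdmeag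
  have hC0res : (⋃ n, Md n)ᶜ ∈ residual Pt := hMdU
  obtain ⟨C, hCsub, hCgd, hCdense⟩ := mem_residual.mp hC0res
  have hCres : C ∈ residual Pt := mem_residual.mpr ⟨C, subset_rfl, hCgd, hCdense⟩
  have hCmeag : IsMeagre Cᶜ := by rw [IsMeagre, compl_compl]; exact hCres
  have hCiff : ∀ x ∈ C, ∀ n, (φ x ∈ Us n ↔ x ∈ Vs n) := by
    intro x hx n
    have := hCsub hx
    rw [mem_compl_iff, mem_iUnion] at this
    push_neg at this
    have h2 := this n
    rw [hMd, mem_setOf_eq, not_not] at h2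
    exact h2
  have hCont : ContinuousOn φ C := by
    intro x hx
    intro W hW
    rcases mem_nhds_iff.mp hW with ⟨W', hW'sub, hW'open, hxW'⟩
    obtain ⟨Bn, hBn𝒰, hφxBn, hBnsub⟩ := h𝒰b.exists_subset_of_mem_open hxW' hW'open
    have : Bn ∈ insert ∅ 𝒰 := mem_insert_of_mem _ hBn𝒰
    rw [hUsrange] at this
    obtain ⟨n, rfl⟩ := this
    rw [Filter.mem_map, mem_nhdsWithin]
    refine ⟨Vs n, hVsopen n, (hCiff x hx n).mp hφxBn, fun y hy => ?_⟩
    exact hW'sub (hBnsub ((hCiff y hy.2 n).mpr hy.1))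
  -- ==================== Gδ representation of C ====================
  obtain ⟨T, hTo, hTc, hCT⟩ := id hCgd
  obtain ⟨UU, hUUrange⟩ : ∃ UU : ℕ → Set Pt, insert univ T = range UU :=
    ((hTc.insert univ).exists_eq_range (insert_nonempty _ _)).imp fun _ h => h
  have hUUopen : ∀ n, IsOpen (UU n) := by
    intro n
    have : UU n ∈ insert univ T := hUUrange ▸ mem_range_self n
    rcases this with h | h
    · rw [h]; exact isOpen_univ
    · exact hTo _ h
  have hCeq : C = ⋂ n, UU n := by
    rw [hCT, ← sInter_range, ← hUUrange, sInter_insert, univ_inter]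
  -- ==================== Step B : bad sets for each level k ====================
  set ψf : ∀ _ : ℕ, _ := fun k : ℕ => fun p : Hd k × Pt => φ ((ek k).symm p) with hψf
  set 𝒞f : ∀ k : ℕ, Set (Hd k × Pt) := fun k => ((ek k).symm) ⁻¹' C with h𝒞f
  set Lset : ∀ k : ℕ, Set (Hd k × Pt) := fun k => {p | ∃ U : Set (Hd k), IsOpen U ∧ p.1 ∈ U ∧
      ∀ s' ∈ U, (s', p.2) ∈ 𝒞f k → ψf k (s', p.2) = ψf k p} with hLsetdef
  have hBadMeag : ∀ k, IsMeagre (𝒞f k \ Lset k) := by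
    intro k
    apply loc_const_generic
    · exact hCgd.preimage' (ek k).symm.continuous
    · have : (𝒞f k)ᶜ = ((ek k).symm) ⁻¹' Cᶜ := rfl
      rw [this]
      exact hCmeag.preimage_of_isOpenMap (ek k).symm.continuous (ek k).symm.isOpenMap
    · exact hCont.comp ((ek k).symm.continuous.continuousOn) (fun p hp => hp)
    · intro t
      set anchor : Pt := (ek k).symm ((fun _ _ => false : Hd k), t) with hanchor
      have hcls : ({z | F (φ anchor) z}).Countable := hFcount _
      obtain ⟨zseq, hzeq⟩ := hcls.exists_eq_range ⟨φ anchor, hF.refl _⟩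
      refine ⟨zseq, fun s => ?_⟩
      have hE1 : ∃ n, ∀ m ≥ n, anchor m = ((ek k).symm (s, t)) m :=
        ⟨k, fun m hm => by rw [hanchor, ek_symm_ge _ _ hm, ek_symm_ge _ _ hm]⟩
      have hFrel : F (φ anchor) (ψf k (s, t)) := (hred _ _).mp hE1
      have h6 : ψf k (s, t) ∈ range zseq := hzeq ▸ hFrel
      obtain ⟨i, hi⟩ := h6
      exact ⟨i, hi.symm⟩
  -- ==================== Step C : iterated genericity ====================
  set B0 : Set Pt := Cᶜ ∪ ⋃ k, (ek k) ⁻¹' (𝒞f k \ Lset k) with hB0def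
  have hB0meag : IsMeagre B0 := by
    refine IsMeagre.union' hCmeag (isMeagre_iUnion fun k => ?_)
    exact (hBadMeag k).preimage_of_isOpenMap (ek k).continuous (ek k).isOpenMap
  set Mse : ℕ → Set Pt := fun j => Nat.rec B0
    (fun _ Mj => Mj ∪ ⋃ k, (tl k) ⁻¹'
      {t | ¬ IsMeagre {s : Hd k | (ek k).symm (s, t) ∈ Mj}}) j with hMse
  have hMse0 : Mse 0 = B0 := rfl
  have hMseS : ∀ j, Mse (j+1) = Mse j ∪ ⋃ k, (tl k) ⁻¹'
      {t | ¬ IsMeagre {s : Hd k | (ek k).symm (s, t) ∈ Mse j}} := fun j => rfl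
  have hMsemeag : ∀ j, IsMeagre (Mse j) := by
    intro j
    induction j with
    | zero => exact hB0meag
    | succ j ih =>
      rw [hMseS]
      refine IsMeagre.union' ih (isMeagre_iUnion fun k => ?_)
      have hpre : IsMeagre (((ek k).symm) ⁻¹' (Mse j)) :=
        ih.preimage_of_isOpenMap (ek k).symm.continuous (ek k).symm.isOpenMap
      have hku := ku_meager' hpre
      have hβ : IsMeagre {t : Pt | ¬ IsMeagre {s : Hd k | (ek k).symm (s, t) ∈ Mse j}} := by
        rw [IsMeagre]
        refine mem_of_superset hku fun t ht => ?_
        simp only [mem_compl_iff, mem_setOf_eq, not_not]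
        exact ht
      exact hβ.preimage_of_isOpenMap (tl_cont k) (tl_open k)
  set G : Set Pt := (⋃ j, Mse j)ᶜ with hGdef
  have hGres : G ∈ residual Pt := isMeagre_iUnion hMsemeag
  obtain ⟨xs, hxsG⟩ : G.Nonempty := (dense_of_mem_residual hGres).nonempty
  -- properties of points of G
  have hGC : ∀ x ∈ G, x ∈ C := by
    intro x hx
    by_contra h
    exact hx (mem_iUnion.mpr ⟨0, Or.inl h⟩)
  have hGL : ∀ x ∈ G, ∀ k, ek k x ∈ Lset k := by
    intro x hx k
    have h1 : x ∉ B0 := fun h => hx (mem_iUnion.mpr ⟨0, h⟩)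
    rw [hB0def] at h1
    simp only [mem_union, mem_compl_iff, mem_iUnion, mem_preimage, mem_diff, not_or,
      not_exists, not_and, not_not] at h1
    exact h1.2 k (by rw [h𝒞f, mem_preimage, Homeomorph.symm_apply_apply]; exact hGC x hx)
  have hGsect : ∀ x ∈ G, ∀ k, IsMeagre {s : Hd k | (ek k).symm (s, tl k x) ∉ G} := by
    intro x hx k
    have : {s : Hd k | (ek k).symm (s, tl k x) ∉ G} =
        ⋃ j, {s : Hd k | (ek k).symm (s, tl k x) ∈ Mse j} := by
      ext s
      simp only [hGdef, mem_setOf_eq, mem_compl_iff, not_not, mem_iUnion]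
    rw [this]
    refine isMeagre_iUnion fun j => ?_
    have h1 : x ∉ Mse (j+1) := fun h => hx (mem_iUnion.mpr ⟨j+1, h⟩)
    rw [hMseS] at h1
    simp only [mem_union, mem_iUnion, mem_preimage, mem_setOf_eq, not_or, not_exists,
      not_not] at h1
    exact h1.2 k
  -- ==================== Step D : the inductive construction ====================
  set State : ℕ → Pt → Set (ℕ × ℕ) → Prop := fun j y D =>
    D.Finite ∧ (∀ n m : ℕ, n < j → m < j → (n, m) ∈ D) ∧ y ∈ G ∧
    (∀ m, j ≤ m → y m = xs m) ∧ φ y = φ xs ∧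
    (∀ i, i < j → ∃ mm, (i, mm) ∈ D ∧ y i mm ≠ xs i mm) ∧
    (∀ w : Pt, (∀ p ∈ D, w p.1 p.2 = y p.1 p.2) → ∀ n, n ≤ j → w ∈ UU n) with hStatedef
  -- base state
  have hxsC : xs ∈ C := hGC xs hxsG
  have hxsUU : ∀ n, xs ∈ UU n := fun n => by
    have := hxsC; rw [hCeq, mem_iInter] at this; exact this n
  obtain ⟨D0, hD0fin, hD0sub⟩ := cylinder_subset xs (hUUopen 0) (hxsUU 0)
  have hbase : State 0 xs D0 := by
    refine ⟨hD0fin, by omega, hxsG, fun _ _ => rfl, rfl, by omega, ?_⟩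
    intro w hw n hn
    interval_cases n
    exact hD0sub hw
  -- the step
  have hstep : ∀ j y D, State j y D → ∃ y' D', State (j+1) y' D' ∧ D ⊆ D' ∧
      ∀ p ∈ D, y' p.1 p.2 = y p.1 p.2 := by
    intro j y D hSt
    obtain ⟨hDfin, hDsq, hyG, hytail, hyval, hydiff, hycyl⟩ := hSt
    set k := j + 1 with hk
    set t' : Pt := tl k xs with ht'def
    -- the tail of y at level k is t'
    have htl : (ek k y).2 = t' := by
      funext n
      show y (n + k) = xs (n + k)
      exact hytail _ (by omega)
    -- local constancy at y
    obtain ⟨U, hUopen, hheadU, hconst⟩ := hGL y hyG k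
    -- the agreement set
    set Agr : Set (Hd k) := ⋂ p ∈ D, {s : Hd k | ∀ hi : p.1 < k, s ⟨p.1, hi⟩ p.2 = y p.1 p.2}
      with hAgrdef
    have hAgrOpen : IsOpen Agr := by
      refine hDfin.isOpen_biInter fun p _ => ?_
      by_cases hi : p.1 < k
      · have : {s : Hd k | ∀ hi : p.1 < k, s ⟨p.1, hi⟩ p.2 = y p.1 p.2} =
            (fun s : Hd k => s ⟨p.1, hi⟩ p.2) ⁻¹' {y p.1 p.2} := by
          ext s
          simp only [mem_setOf_eq, mem_preimage, mem_singleton_iff]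
          exact ⟨fun h => h hi, fun h _ => h⟩
        rw [this]
        exact (isOpen_discrete _).preimage ((continuous_apply p.2).comp (continuous_apply _))
      · have : {s : Hd k | ∀ hi : p.1 < k, s ⟨p.1, hi⟩ p.2 = y p.1 p.2} = univ := by
          ext s; simp [hi]
        rw [this]; exact isOpen_univ
    have hheadAgr : (ek k y).1 ∈ Agr := by
      rw [hAgrdef]
      simp only [mem_iInter, mem_setOf_eq]
      intro p _ hi
      rfl
    -- the difference set
    have hjk : j < k := by omega
    obtain ⟨hDiffOpen, hDiffDense⟩ := dense_ne_column (⟨j, hjk⟩ : Fin k) (xs j)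
    -- the genericity section
    have hsect : IsMeagre {s : Hd k | (ek k).symm (s, t') ∉ G} := hGsect xs hxsG k
    have hRSres : ({s : Hd k | s ⟨j, hjk⟩ ≠ xs j} ∩
        {s : Hd k | (ek k).symm (s, t') ∉ G}ᶜ) ∈ residual (Hd k) :=
      inter_mem (residual_of_dense_open hDiffOpen hDiffDense) hsect
    -- choose the new head
    obtain ⟨sy, hsyUA, hsyRS⟩ := (dense_of_mem_residual hRSres).inter_open_nonempty
      (U ∩ Agr) (hUopen.inter hAgrOpen) ⟨(ek k y).1, hheadU, hheadAgr⟩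
    obtain ⟨hsyDiff, hsyG'⟩ := hsyRS
    obtain ⟨hsyU, hsyAgr⟩ := hsyUA
    set y' : Pt := (ek k).symm (sy, t') with hy'def
    have hy'G : y' ∈ G := by
      have h0 := hsyG'
      simp only [mem_compl_iff, mem_setOf_eq, not_not] at h0
      exact h0
    have hy'C : y' ∈ C := hGC y' hy'G
    -- agreement of y' with y on D
    have hagr : ∀ p ∈ D, y' p.1 p.2 = y p.1 p.2 := by
      rintro ⟨i, m⟩ hp
      by_cases hi : i < k
      · have h1 : y' i = sy ⟨i, hi⟩ := ek_symm_lt sy t' hi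
        rw [h1]
        have := hsyAgr
        rw [hAgrdef] at this
        simp only [mem_iInter, mem_setOf_eq] at this
        exact this (i, m) hp hi
      · have hki : k ≤ i := by omega
        have h1 : y' i = t' (i - k) := ek_symm_ge sy t' hki
        rw [h1]
        show xs ((i - k) + k) m = y i m
        rw [Nat.sub_add_cancel hki]
        exact (congrFun (hytail i (by omega)) m).symm
    -- the value is preserved
    have hy'val : φ y' = φ xs := by
      have h1 : (sy, t') ∈ 𝒞f k := by
        rw [h𝒞f, mem_preimage]
        exact hy'C
      have h1' : (sy, (ek k y).2) ∈ 𝒞f k := by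
        have heq : ((sy, (ek k y).2) : Hd k × Pt) = (sy, t') := by rw [htl]
        rw [heq]
        exact h1
      have h2 : ψf k (sy, (ek k y).2) = ψf k (ek k y) := hconst sy hsyU h1'
      have h2' : ψf k (sy, t') = ψf k (ek k y) := by
        have heq : ((sy, t') : Hd k × Pt) = (sy, (ek k y).2) := by rw [htl]
        rw [heq]
        exact h2
      have h4 : ψf k (ek k y) = φ y := by
        show φ ((ek k).symm (ek k y)) = φ y
        rw [Homeomorph.symm_apply_apply]
      have h3 : φ y' = ψf k (sy, t') := rfl
      rw [h3, h2', h4, hyval]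
    -- the new difference witness
    obtain ⟨mwit, hmwit⟩ := Function.ne_iff.mp hsyDiff
    -- the new Gδ trapping constraint
    have hy'UU : y' ∈ UU (j+1) := by
      have := hy'C; rw [hCeq, mem_iInter] at this; exact this (j+1)
    obtain ⟨E, hEfin, hEsub⟩ := cylinder_subset y' (hUUopen (j+1)) hy'UU
    -- assemble
    refine ⟨y', D ∪ (Iio (j+1) ×ˢ Iio (j+1)) ∪ {(j, mwit)} ∪ E, ?_, ?_, hagr⟩
    · refine ⟨((hDfin.union ((finite_Iio _).prod (finite_Iio _))).union
        (finite_singleton _)).union hEfin, ?_, hy'G, ?_, hy'val, ?_, ?_⟩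
      · intro n m hn hm
        exact Or.inl (Or.inl (Or.inr ⟨hn, hm⟩))
      · intro m hm
        have h1 : y' m = t' (m - k) := ek_symm_ge sy t' (by omega)
        rw [h1]
        show xs ((m - k) + k) = xs m
        rw [Nat.sub_add_cancel (by omega : k ≤ m)]
      · intro i hi
        rcases Nat.lt_succ_iff_lt_or_eq.mp hi with h | rfl
        · obtain ⟨mm, hmmD, hne⟩ := hydiff i h
          exact ⟨mm, Or.inl (Or.inl (Or.inl hmmD)), by rw [hagr (i, mm) hmmD]; exact hne⟩
        · refine ⟨mwit, Or.inl (Or.inr rfl), ?_⟩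
          have h1 : y' i = sy ⟨i, hjk⟩ := ek_symm_lt sy t' hjk
          rw [h1]
          exact hmwit
      · intro w hw n hn
        rcases Nat.lt_succ_iff_lt_or_eq.mp (Nat.lt_succ_of_le hn) with h | rfl
        · -- n ≤ j : use old cylinder
          refine hycyl w ?_ n (by omega)
          intro p hp
          rw [← hagr p hp]
          exact hw p (Or.inl (Or.inl (Or.inl hp)))
        · -- n = j + 1
          exact hEsub fun p hp => hw p (Or.inr hp)
    · intro p hp
      exact Or.inl (Or.inl (Or.inl hp))
  -- ==================== Step E : the fusion sequence and its limit ====================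
  have hstep' : ∀ (j : ℕ) (c : Pt × Set (ℕ × ℕ)), ∃ c' : Pt × Set (ℕ × ℕ),
      State j c.1 c.2 → State (j+1) c'.1 c'.2 ∧ c.2 ⊆ c'.2 ∧
      ∀ p ∈ c.2, c'.1 p.1 p.2 = c.1 p.1 p.2 := by
    intro j c
    by_cases h : State j c.1 c.2
    · obtain ⟨y', D', h1, h2, h3⟩ := hstep j c.1 c.2 h
      exact ⟨(y', D'), fun _ => ⟨h1, h2, h3⟩⟩
    · exact ⟨c, fun h' => absurd h' h⟩
  choose nextc hnextc using hstep'
  set chain : ℕ → Pt × Set (ℕ × ℕ) := fun j => Nat.rec (xs, D0) (fun j c => nextc j c) j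
    with hchaindef
  have hchainS : ∀ j, Nat.rec (xs, D0) (fun j c => nextc j c) (j+1) = nextc j (chain j) :=
    fun j => rfl
  set yj : ℕ → Pt := fun j => (chain j).1 with hyjdef
  set Dj : ℕ → Set (ℕ × ℕ) := fun j => (chain j).2 with hDjdef
  have hchainState : ∀ j, State j (yj j) (Dj j) := by
    intro j
    induction j with
    | zero => exact hbase
    | succ j ih => exact ((hnextc j (chain j)) ih).1
  have hchainagree : ∀ j, Dj j ⊆ Dj (j+1) ∧
      ∀ p ∈ Dj j, yj (j+1) p.1 p.2 = yj j p.1 p.2 := by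
    intro j
    obtain ⟨_, h2, h3⟩ := (hnextc j (chain j)) (hchainState j)
    exact ⟨h2, h3⟩
  have hDmono : ∀ j j', j ≤ j' → Dj j ⊆ Dj j' := by
    intro j j' hle
    induction j', hle using Nat.le_induction with
    | base => exact subset_rfl
    | succ j' hle ih => exact ih.trans (hchainagree j').1
  have hagree2 : ∀ j j', j ≤ j' → ∀ p ∈ Dj j, yj j' p.1 p.2 = yj j p.1 p.2 := by
    intro j j' hle
    induction j', hle using Nat.le_induction with
    | base => intro p _; rfl
    | succ j' hle ih =>
      intro p hp
      rw [(hchainagree j').2 p (hDmono j j' hle hp)]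
      exact ih p hp
  set ylim : Pt := fun n m => yj (max n m + 1) n m with hylimdef
  have hsq : ∀ n m : ℕ, (n, m) ∈ Dj (max n m + 1) := by
    intro n m
    exact (hchainState (max n m + 1)).2.1 n m (by omega) (by omega)
  have hlimagree : ∀ j p, p ∈ Dj j → ylim p.1 p.2 = yj j p.1 p.2 := by
    rintro j ⟨n, m⟩ hp
    set J := max n m + 1 with hJ
    rcases le_total j J with h | h
    · show yj J n m = yj j n m
      exact hagree2 j J h (n, m) hp
    · show yj J n m = yj j n m
      exact (hagree2 J j h (n, m) (hsq n m)).symm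
  have hylimC : ylim ∈ C := by
    rw [hCeq, mem_iInter]
    intro n
    refine (hchainState n).2.2.2.2.2.2 ylim ?_ n le_rfl
    intro p hp
    exact hlimagree n p hp
  have hdiffs : ∀ i, ∃ m, ylim i m ≠ xs i m := by
    intro i
    obtain ⟨mm, hmmD, hne⟩ := (hchainState (i+1)).2.2.2.2.2.1 i (by omega)
    exact ⟨mm, by rw [hlimagree (i+1) (i, mm) hmmD]; exact hne⟩
  have htend : Tendsto yj atTop (𝓝 ylim) := by
    rw [tendsto_pi_nhds]
    intro n
    rw [tendsto_pi_nhds]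
    intro m
    refine tendsto_const_nhds.congr' ?_
    rw [Filter.EventuallyEq, eventually_atTop]
    refine ⟨max n m + 1, fun j hj => ?_⟩
    exact (hagree2 (max n m + 1) j hj (n, m) (hsq n m)).symm
  have hφlim : φ ylim = φ xs := by
    have hyjC : ∀ j, yj j ∈ C := fun j => hGC _ (hchainState j).2.2.1
    have h1 : Tendsto (fun j => φ (yj j)) atTop (𝓝 (φ ylim)) :=
      ((hCont ylim hylimC).tendsto).comp
        (tendsto_nhdsWithin_of_tendsto_nhds_of_eventually_within yj htend
          (Eventually.of_forall hyjC))
    have h2 : (fun j => φ (yj j)) = fun _ => φ xs :=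
      funext fun j => (hchainState j).2.2.2.2.1
    rw [h2] at h1
    exact tendsto_nhds_unique h1 tendsto_const_nhds
  -- ==================== Final contradiction ====================
  have hFf : F (φ xs) (φ ylim) := by rw [hφlim]; exact hF.refl _
  obtain ⟨n, hn⟩ := (hred xs ylim).mpr hFf
  obtain ⟨m, hm⟩ := hdiffs n
  exact hm (congrFun (hn n le_rfl) m).symm
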